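/- Let k be a σ-ring, A a k-σ-algebra that is faithfully flat as a k-module, and B₀ a k-σ-algebra. Equip B := B₀ ⊗[k] A with the ring endomorphism σ_B determined by σ_B(b ⊗ a) = σ_{B₀}(b) ⊗ σ_A(a) and with its A-algebra structure via the right tensor factor. Suppose there is a finite subset T ⊆ B such that B is generated as an A-algebra by the set {σ_B^i(t) | t ∈ T, i ≥ 0}. Then there is a finite subset T₀ ⊆ B₀ such that B₀ is generated as a k-algebra by the set {σ_{B₀}^i(t) | t ∈ T₀, i ≥ 0}. (This expresses that being finitely σ-generated descends along faithfully flat extensions of difference rings.) -/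

import Mathlib

open TensorProduct

/-- Being finitely σ-generated descends along faithfully flat extensions of
difference rings: if `B = B₀ ⊗[k] A` is generated as an `A`-algebra by the
σ-orbits of a finite set, then `B₀` is generated as a `k`-algebra by the
σ-orbits of a finite set. -/
theorem finitely_sigma_generated_descends
    (k A B₀ : Type*) [CommRing k]
    [CommRing A] [Algebra k A] [Module.FaithfullyFlat k A]
    [CommRing B₀] [Algebra k B₀]
    (σk : k →+* k) (σA : A →+* A) (σB₀ : B₀ →+* B₀)
    (hσA : ∀ c : k, σA (algebraMap k A c) = algebraMap k A (σk c))
    (hσB₀ : ∀ c : k, σB₀ (algebraMap k B₀ c) = algebraMap k B₀ (σk c))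
    (σB : B₀ ⊗[k] A →+* B₀ ⊗[k] A)
    (hσB : ∀ (b : B₀) (a : A), σB (b ⊗ₜ[k] a) = σB₀ b ⊗ₜ[k] σA a)
    (T : Finset (B₀ ⊗[k] A))
    (hgen : Algebra.adjoin k
      (Set.range (Algebra.TensorProduct.includeRight : A →ₐ[k] B₀ ⊗[k] A) ∪
        {x | ∃ t ∈ T, ∃ i : ℕ, x = (σB ^ i) t}) = ⊤) :
    ∃ T₀ : Finset B₀,
      Algebra.adjoin k {x | ∃ t ∈ T₀, ∃ i : ℕ, x = (σB₀ ^ i) t} = ⊤ := by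
  classical
  -- decompose each element of T as a finite sum of simple tensors
  choose S hS using fun t : B₀ ⊗[k] A => TensorProduct.exists_finset (R := k) t
  set T₀ : Finset B₀ := T.biUnion fun t => (S t).image Prod.fst with hT₀
  refine ⟨T₀, ?_⟩
  set C₀ : Subalgebra k B₀ :=
    Algebra.adjoin k {x | ∃ t ∈ T₀, ∃ i : ℕ, x = (σB₀ ^ i) t} with hC₀
  -- iterates of σB on simple tensors
  have pow_tmul : ∀ (i : ℕ) (b : B₀) (a : A),
      (σB ^ i) (b ⊗ₜ[k] a) = (σB₀ ^ i) b ⊗ₜ[k] (σA ^ i) a := by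
    intro i
    induction i with
    | zero => intro b a; simp
    | succ n ih =>
      intro b a
      simp only [pow_succ, RingHom.coe_mul, Function.comp_apply, hσB]
      rw [ih (σB₀ b) (σA a)]
  -- the comparison algebra map
  set φ : C₀ ⊗[k] A →ₐ[k] B₀ ⊗[k] A :=
    Algebra.TensorProduct.map C₀.val (AlgHom.id k A) with hφ
  have hφtmul : ∀ (c : C₀) (a : A), φ (c ⊗ₜ[k] a) = (c : B₀) ⊗ₜ[k] a := fun c a => rfl
  -- φ is surjective
  have hrange : φ.range = ⊤ := by
    rw [← top_le_iff, ← hgen]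
    apply Algebra.adjoin_le
    rintro x (⟨a, rfl⟩ | ⟨t, ht, i, rfl⟩)
    · exact ⟨(1 : C₀) ⊗ₜ[k] a, by simp [hφtmul]⟩
    · rw [SetLike.mem_coe, AlgHom.mem_range]
      refine ⟨∑ p ∈ (S t).attach, (⟨(σB₀ ^ i) p.1.1, ?_⟩ : C₀) ⊗ₜ[k] (σA ^ i) p.1.2, ?_⟩
      · apply Algebra.subset_adjoin
        refine ⟨p.1.1, ?_, i, rfl⟩
        simp only [hT₀, Finset.mem_biUnion]
        exact ⟨t, ht, Finset.mem_image_of_mem Prod.fst p.2⟩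
      · rw [map_sum]
        conv_rhs => rw [hS t, map_sum,
          ← Finset.sum_attach (S t) (fun p => (σB ^ i) (p.1 ⊗ₜ[k] p.2))]
        exact Finset.sum_congr rfl fun p _ => by rw [hφtmul, pow_tmul]
  have hφsurj : Function.Surjective φ := by
    intro x
    have : x ∈ φ.range := hrange ▸ Algebra.mem_top
    exact this
  -- translate to rTensor of the inclusion
  set p : Submodule k B₀ := Subalgebra.toSubmodule C₀ with hp
  set ι : C₀ →ₗ[k] B₀ := p.subtype with hι
  have hφlin : φ.toLinearMap = LinearMap.rTensor A ι := by
    apply TensorProduct.ext'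
    intro c a
    rfl
  have hιsurj : Function.Surjective (LinearMap.rTensor A ι) := by
    rw [← hφlin]; exact hφsurj
  -- quotient map
  set q : B₀ →ₗ[k] B₀ ⧸ p := p.mkQ with hq
  have hcomp : q ∘ₗ ι = 0 := by
    ext c
    simp only [hq, hι, LinearMap.comp_apply, Submodule.subtype_apply,
      Submodule.mkQ_apply, LinearMap.zero_apply, Submodule.Quotient.mk_eq_zero]
    exact c.2
  have hqzero : LinearMap.rTensor A q = 0 := by
    apply LinearMap.ext
    intro x
    obtain ⟨y, rfl⟩ := hιsurj x
    rw [← LinearMap.rTensor_comp_apply, hcomp, LinearMap.rTensor_zero]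
    rfl
  have hsub : Subsingleton ((B₀ ⧸ p) ⊗[k] A) := by
    refine subsingleton_of_forall_eq 0 fun z => ?_
    obtain ⟨y, rfl⟩ := LinearMap.rTensor_surjective A (g := q) p.mkQ_surjective z
    rw [hqzero]; rfl
  have : Subsingleton (B₀ ⧸ p) :=
    Module.FaithfullyFlat.rTensor_reflects_triviality k A (B₀ ⧸ p)
  have hptop : p = ⊤ := Submodule.Quotient.subsingleton_iff.mp this
  rw [hp] at hptop
  exact Algebra.toSubmodule_eq_top.mp hptop
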